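/- arXiv:1612.06054 — 3 statements merged into one kernel-verified Lean document; each statement's English description precedes it below -/
import Mathlib

section
/- Let L be a first-order language with only function symbols and let K be a class of metric L-algebras (in a fixed universe) that is closed under isometric L-isomorphisms, under M-products (for every family (A_i)_{i∈I} of members of K, the product Π_i A_i with pointwise operations and the sup extended metric d((a_i)_i,(b_i)_i) = sup_i d(a_i, b_i) belongs to K), and under M-subalgebras (every L-substructure of a member of K, with the induced metric, belongs to K). Then for every set X there exist a metric L-algebra F_K(X) in K and a surjective L-homomorphism F : Term_L(X) → F_K(X) from the term algebra over X such that for every A in K and every L-homomorphism f : Term_L(X) → A there exists a unique non-expansive L-homomorphism h : F_K(X) → A with h ∘ F = f. -/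
open FirstOrder FirstOrder.Language
open scoped ENNReal

universe u v w x y z

noncomputable section

namespace MetricAlgebraPaper

/-- The sup extended metric on a product of extended metric spaces. -/
def supEMetric {I : Type*} (A : I → Type*) [∀ i, EMetricSpace (A i)] :
    EMetricSpace (∀ i, A i) where
  edist f g := ⨆ i, edist (f i) (g i)
  edist_self f := by simp
  edist_comm f g := by simp [edist_comm]
  edist_triangle f g h :=
    iSup_le fun i => (edist_triangle (f i) (g i) (h i)).trans
      (add_le_add (le_iSup (fun j => edist (f j) (g j)) i)
        (le_iSup (fun j => edist (g j) (h j)) i))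
  eq_of_edist_eq_zero := by
    intro f g hfg
    funext i
    exact eq_of_edist_eq_zero
      (le_antisymm (le_trans (le_iSup (fun j => edist (f j) (g j)) i) hfg.le) (zero_le))

/-- The pointwise `L`-structure on a product. -/
def piStr (L : FirstOrder.Language.{u, v}) {I : Type*} (A : I → Type*)
    [∀ i, L.Structure (A i)] : L.Structure (∀ i, A i) where
  funMap f a := fun i => Structure.funMap f fun j => a j i
  RelMap r a := ∀ i, Structure.RelMap r fun j => a j i

/-- The term algebra structure on the set of `L`-terms over `X`. -/
instance termStructure (L : FirstOrder.Language.{u, v}) (X : Type w) :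
    L.Structure (L.Term X) where
  funMap f ts := Term.func f ts
  RelMap _ _ := False

/-- A map between extended metric spaces is non-expansive if it does not increase distances. -/
def NonExpansive {α : Type*} {β : Type*} [EMetricSpace α] [EMetricSpace β] (f : α → β) : Prop :=
  ∀ a b : α, edist (f a) (f b) ≤ edist a b

/-- A metric `L`-algebra: a type equipped with an extended metric and an `L`-structure. -/
structure MetricAlg (L : FirstOrder.Language.{u, v}) where
  carrier : Type u
  [emetric : EMetricSpace carrier]
  [str : L.Structure carrier]

attribute [instance] MetricAlg.emetric MetricAlg.str

instance {L : FirstOrder.Language.{u, v}} : CoeSort (MetricAlg L) (Type u) :=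
  ⟨MetricAlg.carrier⟩

variable {L : FirstOrder.Language.{u, v}}

/-- Satisfaction of the M-equation `X ⊢ s =_ε t` in a metric `L`-algebra. -/
def Sat (A : MetricAlg L) {X : Type w} (s t : L.Term X) (ε : ℝ≥0∞) : Prop :=
  ∀ v : X → A, edist (s.realize v) (t.realize v) ≤ ε

/-- A metric `L`-algebra is quantitative if all its operations are non-expansive
for the sup metric on finite powers. -/
def IsQuantitative (A : MetricAlg L) : Prop :=
  ∀ (n : ℕ) (f : L.Functions n) (a b : Fin n → A),
    edist (Structure.funMap f a) (Structure.funMap f b) ≤ ⨆ i, edist (a i) (b i)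

/-- The M-product of a family of metric `L`-algebras: the product of the underlying
`L`-structures equipped with the sup extended metric. -/
def MProd {I : Type u} (A : I → MetricAlg L) : MetricAlg L where
  carrier := ∀ i, (A i).carrier
  emetric := supEMetric fun i => (A i).carrier
  str := piStr L fun i => (A i).carrier

/-- An M-subalgebra of a metric `L`-algebra: an `L`-substructure with the induced metric. -/
def MSub (A : MetricAlg L) (S : L.Substructure A.carrier) : MetricAlg L where
  carrier := S
  emetric := inferInstance
  str := inferInstance

/-- Closure of a class under isometric `L`-isomorphisms. -/
def ClosedUnderIso (K : MetricAlg L → Prop) : Prop :=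
  ∀ A B : MetricAlg L, K A → ∀ φ : A ≃[L] B, Isometry ⇑φ → K B

/-- Closure of a class under M-products (with the sup extended metric). -/
def ClosedUnderProd (K : MetricAlg L → Prop) : Prop :=
  ∀ (I : Type u) (A : I → MetricAlg L), (∀ i, K (A i)) → K (MProd A)

/-- Closure of a class under M-subalgebras (with the induced metric). -/
def ClosedUnderSub (K : MetricAlg L → Prop) : Prop :=
  ∀ A : MetricAlg L, K A → ∀ S : L.Substructure A.carrier, K (MSub A S)

/-- Closure of a class under M-quotients (surjective non-expansive homomorphic images). -/
def ClosedUnderQuot (K : MetricAlg L → Prop) : Prop :=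
  ∀ A B : MetricAlg L, K A → ∀ π : A →[L] B, Function.Surjective ⇑π → NonExpansive ⇑π → K B


/-- Data describing a quotient of the term algebra with a metric. -/
structure QData (L : FirstOrder.Language.{u, v}) (X : Type u) where
  s : Setoid (L.Term X)
  congr : ∀ (n : ℕ) (f : L.Functions n) (ts ts' : Fin n → L.Term X),
    (∀ i, s.r (ts i) (ts' i)) → s.r (Term.func f ts) (Term.func f ts')
  d : Quotient s → Quotient s → ℝ≥0∞
  d_self : ∀ x, d x x = 0
  d_comm : ∀ x y, d x y = d y x
  d_tri : ∀ x y z, d x z ≤ d x y + d y z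
  d_eq : ∀ x y, d x y = 0 → x = y

/-- The quotient algebra described by a `QData`. -/
def QData.alg {L : FirstOrder.Language.{u, v}} {X : Type u} (q : QData L X) : MetricAlg L where
  carrier := Quotient q.s
  emetric :=
    { edist := q.d
      edist_self := q.d_self
      edist_comm := q.d_comm
      edist_triangle := q.d_tri
      eq_of_edist_eq_zero := fun h => q.d_eq _ _ h }
  str :=
    { funMap := fun {n} f ts => Quotient.mk q.s (Term.func f fun i => (ts i).out)
      RelMap := fun _ _ => False }

theorem QData.mk_func {L : FirstOrder.Language.{u, v}} {X : Type u} (q : QData L X)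
    {n : ℕ} (f : L.Functions n) (ts : Fin n → L.Term X) :
    (Quotient.mk q.s (Term.func f ts) : q.alg.carrier) =
      Structure.funMap (M := q.alg.carrier) f (fun i => Quotient.mk q.s (ts i)) := by
  letI := q.s
  refine Quotient.sound ?_
  exact Setoid.symm (q.congr n f _ _ fun i =>
    Quotient.exact (Quotient.out_eq (Quotient.mk q.s (ts i))))

/-- If a class `K` of metric `L`-algebras is closed under isometric
isomorphisms, M-products and M-subalgebras, then for every set `X` there is a
`K`-free algebra over `X`: a member `FA` of `K` together with a surjective homomorphism
`F` from the term algebra over `X` such that every homomorphism from the term algebra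
to a member of `K` factors uniquely through `F` via a non-expansive homomorphism. -/
theorem exists_free_algebra (L : FirstOrder.Language.{u, v}) [L.IsAlgebraic]
    (K : MetricAlg L → Prop)
    (hIso : ClosedUnderIso K) (hProd : ClosedUnderProd K) (hSub : ClosedUnderSub K)
    (X : Type u) :
    ∃ (FA : MetricAlg L) (F : L.Term X →[L] FA),
      K FA ∧ Function.Surjective ⇑F ∧
        ∀ A : MetricAlg L, K A → ∀ f : L.Term X →[L] A,
          ∃! h : FA →[L] A, NonExpansive ⇑h ∧ ⇑h ∘ ⇑F = ⇑f := by
  classical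
  let I := {q : QData L X // K q.alg}
  let B : I → MetricAlg L := fun i => i.1.alg
  let FA0 : MetricAlg L := MProd B
  have hKFA0 : K FA0 := hProd I B fun i => i.2
  let F0 : L.Term X →[L] FA0 :=
    { toFun := fun t i => Quotient.mk i.1.s t
      map_fun' := by
        intro n f x
        funext i
        exact i.1.mk_func f x
      map_rel' := fun r _ => isEmptyElim r }
  let R := F0.range
  let FA : MetricAlg L := MSub FA0 R
  have hKFA : K FA := hSub FA0 hKFA0 R
  let F : L.Term X →[L] FA := Hom.codRestrict R F0 fun t => F0.mem_range_self t
  have hFsurj : Function.Surjective ⇑F := by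
    rintro ⟨x, hx⟩
    obtain ⟨t, ht⟩ := hx
    exact ⟨t, Subtype.ext ht⟩
  refine ⟨FA, F, hKFA, hFsurj, ?_⟩
  intro A hKA f
  -- build the quotient data for `f`
  let s : Setoid (L.Term X) := Setoid.ker ⇑f
  let e : Quotient s → A := Quotient.lift ⇑f fun _ _ h => h
  have einj : Function.Injective e := Setoid.kerLift_injective ⇑f
  let q : QData L X :=
    { s := s
      congr := by
        intro n g ts ts' hts
        show f (Term.func g ts) = f (Term.func g ts')
        calc f (Term.func g ts) = Structure.funMap g (⇑f ∘ ts) := f.map_fun g ts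
          _ = Structure.funMap g (⇑f ∘ ts') := by
              congr 1; funext i; exact hts i
          _ = f (Term.func g ts') := (f.map_fun g ts').symm
      d := fun x y => edist (e x) (e y)
      d_self := fun x => edist_self _
      d_comm := fun x y => edist_comm _ _
      d_tri := fun x y z => edist_triangle _ _ _
      d_eq := fun x y h => einj (eq_of_edist_eq_zero h) }
  have ehom : ∀ (n : ℕ) (g : L.Functions n) (ts : Fin n → q.alg.carrier),
      e (Structure.funMap (M := q.alg.carrier) g ts)
        = Structure.funMap g (fun i => e (ts i)) := by
    intro n g ts
    show f (Term.func g fun i => (ts i).out) = _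
    calc f (Term.func g fun i => (ts i).out)
        = Structure.funMap g (⇑f ∘ fun i => (ts i).out) := f.map_fun g _
      _ = _ := by
          congr 1; funext i
          show f (ts i).out = e (ts i)
          conv_rhs => rw [← Quotient.out_eq (ts i)]
          rfl
  -- `q.alg` is in `K` since it is isometrically isomorphic to a substructure of `A`
  let A' : MetricAlg L := MSub A f.range
  have hKA' : K A' := hSub A hKA f.range
  let e' : q.alg.carrier → A'.carrier := fun x =>
    ⟨e x, Quotient.inductionOn x fun t => ⟨t, rfl⟩⟩
  have hbij : Function.Bijective e' := by
    constructor
    · intro x y hxy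
      exact einj (congrArg Subtype.val hxy)
    · rintro ⟨a, t, ht⟩
      exact ⟨Quotient.mk s t, Subtype.ext ht⟩
  let ψ : q.alg ≃[L] A' :=
    { toEquiv := Equiv.ofBijective e' hbij
      map_fun' := by
        intro n g ts
        exact Subtype.ext (ehom n g ts)
      map_rel' := fun r _ => isEmptyElim r }
  have hKq : K q.alg := by
    refine hIso A' q.alg hKA' ψ.symm ?_
    intro x y
    show edist (e (ψ.symm x)) (e (ψ.symm y)) = edist x y
    have hx : e (ψ.symm x) = x.1 :=
      congrArg Subtype.val (ψ.apply_symm_apply x)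
    have hy : e (ψ.symm y) = y.1 :=
      congrArg Subtype.val (ψ.apply_symm_apply y)
    rw [hx, hy]
    rfl
  let i0 : I := ⟨q, hKq⟩
  -- the factorizing homomorphism
  let h : FA →[L] A :=
    { toFun := fun x => e (x.1 i0)
      map_fun' := by
        intro n g xs
        exact ehom n g fun j => (xs j).1 i0
      map_rel' := fun r _ => isEmptyElim r }
  have hne : NonExpansive ⇑h := by
    intro x y
    show edist (x.1 i0) (y.1 i0) ≤ ⨆ i, edist (x.1 i) (y.1 i)
    exact le_iSup (fun i => edist (x.1 i) (y.1 i)) i0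
  have hcomp : ⇑h ∘ ⇑F = ⇑f := by
    funext t
    show e (Quotient.mk s t) = f t
    rfl
  refine ⟨h, ⟨hne, hcomp⟩, ?_⟩
  rintro h' ⟨-, hc⟩
  apply DFunLike.ext
  intro x
  obtain ⟨t, rfl⟩ := hFsurj x
  calc h' (F t) = f t := congrFun hc t
    _ = h (F t) := (congrFun hcomp t).symm


end MetricAlgebraPaper
end
end

section
/- Let L be a first-order language with only function symbols and let K be a class of metric L-algebras closed under isometric L-isomorphisms. Then K is a variety (i.e., there exists a set I of M-equations, each over a finite variable set, such that K is exactly the class of metric L-algebras satisfying every M-equation in I) if and only if K is closed under M-products (products with pointwise operations and the sup extended metric), M-subalgebras (L-substructures with the induced metric), and M-quotients (images of surjective non-expansive L-homomorphisms). -/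
open FirstOrder FirstOrder.Language
open scoped ENNReal

universe u v w x y z

noncomputable section

namespace MetricAlgebraPaper

variable {L : FirstOrder.Language.{u, v}}

/-! ### Auxiliary machinery -/

lemma edist_MProd {I : Type u} (A : I → MetricAlg L) (f g : MProd A) :
    edist f g = ⨆ i, edist (f i) (g i) := rfl

lemma realize_MProd {I : Type u} (A : I → MetricAlg L) {X : Type x} (t : L.Term X)
    (v : X → MProd A) (i : I) :
    (t.realize v) i = t.realize (fun x => v x i) := by
  induction t with
  | var => rfl
  | func f ts ih =>
      show Structure.funMap f (fun j => Term.realize v (ts j)) i = _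
      show Structure.funMap f (fun j => Term.realize v (ts j) i) = _
      simp only [ih]
      rfl

/-- Validity of an M-equation throughout a class `K`. -/
def KValid (K : MetricAlg L → Prop) {X : Type x} (s t : L.Term X) (ε : ℝ≥0∞) : Prop :=
  ∀ B : MetricAlg L, K B → ∀ v : X → B, edist (s.realize v) (t.realize v) ≤ ε

/-- The distance between two terms induced by a class `K`. -/
def kdist (K : MetricAlg L → Prop) {X : Type x} (s t : L.Term X) : ℝ≥0∞ :=
  sInf {ε | KValid K s t ε}

lemma kValid_kdist (K : MetricAlg L → Prop) {X : Type x} (s t : L.Term X) :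
    KValid K s t (kdist K s t) := fun B hB v =>
  le_sInf fun _ hε => hε B hB v

lemma kdist_le {K : MetricAlg L → Prop} {X : Type x} {s t : L.Term X} {ε : ℝ≥0∞}
    (h : KValid K s t ε) : kdist K s t ≤ ε := sInf_le h

lemma kdist_eq_zero_iff {K : MetricAlg L → Prop} {X : Type x} {s t : L.Term X} :
    kdist K s t = 0 ↔ ∀ B : MetricAlg L, K B → ∀ v : X → B,
      s.realize v = t.realize v := by
  constructor
  · intro h B hB v
    have := kValid_kdist K s t B hB v
    rw [h] at this
    simpa using this
  · intro h
    refine le_antisymm (kdist_le fun B hB v => ?_) (zero_le)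
    rw [h B hB v]
    simp
lemma kdist_self (K : MetricAlg L → Prop) {X : Type x} (s : L.Term X) :
    kdist K s s = 0 :=
  kdist_eq_zero_iff.2 fun _ _ _ => rfl

lemma kdist_comm (K : MetricAlg L → Prop) {X : Type x} (s t : L.Term X) :
    kdist K s t = kdist K t s := by
  have key : ∀ u w : L.Term X, kdist K u w ≤ kdist K w u := fun u w =>
    kdist_le fun B hB v => by
      rw [edist_comm]
      exact kValid_kdist K w u B hB v
  exact le_antisymm (key s t) (key t s)

lemma kdist_triangle (K : MetricAlg L → Prop) {X : Type x} (s t u : L.Term X) :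
    kdist K s u ≤ kdist K s t + kdist K t u :=
  kdist_le fun B hB v =>
    (edist_triangle _ (t.realize v) _).trans
      (add_le_add (kValid_kdist K s t B hB v) (kValid_kdist K t u B hB v))

lemma kdist_congr {K : MetricAlg L → Prop} {X : Type x} {s t s' t' : L.Term X}
    (hs : kdist K s s' = 0) (ht : kdist K t t' = 0) :
    kdist K s t = kdist K s' t' := by
  have key : ∀ a a' b b' : L.Term X, kdist K a a' = 0 → kdist K b b' = 0 →
      kdist K a b ≤ kdist K a' b' := fun a a' b b' ha hb =>
    kdist_le fun B hB v => by
      rw [kdist_eq_zero_iff.1 ha B hB v, kdist_eq_zero_iff.1 hb B hB v]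
      exact kValid_kdist K a' b' B hB v
  refine le_antisymm (key _ _ _ _ hs ht) (key _ _ _ _ ?_ ?_)
  · rw [kdist_comm]; exact hs
  · rw [kdist_comm]; exact ht

lemma kdist_func {K : MetricAlg L → Prop} {X : Type x} {n : ℕ} (f : L.Functions n)
    {s t : Fin n → L.Term X} (h : ∀ i, kdist K (s i) (t i) = 0) :
    kdist K (Term.func f s) (Term.func f t) = 0 :=
  kdist_eq_zero_iff.2 fun B hB v => by
    show Structure.funMap f (fun i => (s i).realize v) =
      Structure.funMap f (fun i => (t i).realize v)
    congr 1
    funext i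
    exact kdist_eq_zero_iff.1 (h i) B hB v
lemma exists_fin_repr {X : Type x} (s t : L.Term X) :
    ∃ (n : ℕ) (s₀ t₀ : L.Term (Fin n)) (ρ : Fin n → X), Function.Injective ρ ∧
      ∀ (M : Type z) (_ : L.Structure M) (v : X → M),
        s.realize v = s₀.realize (v ∘ ρ) ∧ t.realize v = t₀.realize (v ∘ ρ) := by
  classical
  set F : Finset X := s.varFinset ∪ t.varFinset with hF
  have hs : ↑s.varFinset ⊆ (↑F : Set X) := by
    simp only [hF, Finset.coe_union]; exact Set.subset_union_left
  have ht : ↑t.varFinset ⊆ (↑F : Set X) := by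
    simp only [hF, Finset.coe_union]; exact Set.subset_union_right
  set n := F.card with hn
  set eqv : ↥F ≃ Fin n := F.equivFin with heqv
  set g : ↥(↑F : Set X) → Fin n := fun y => eqv ⟨y.1, by exact_mod_cast y.2⟩ with hg
  set ρ : Fin n → X := fun i => ((eqv.symm i : ↥F) : X) with hρ
  have hρg : ∀ y : ↥(↑F : Set X), ρ (g y) = (y : X) := by
    intro y
    simp [hρ, hg]
  refine ⟨n, (s.restrictVar (Set.inclusion hs)).relabel g,
    (t.restrictVar (Set.inclusion ht)).relabel g, ρ, ?_, ?_⟩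
  · intro i j hij
    apply eqv.symm.injective
    exact Subtype.ext hij
  · intro M strM v
    letI := strM
    have hcomp : (v ∘ ρ) ∘ g = v ∘ (Subtype.val : ↥(↑F : Set X) → X) := by
      funext y
      simp only [Function.comp_apply]
      rw [hρg y]
    constructor
    · rw [Term.realize_relabel, hcomp, Term.realize_restrictVar' hs]
    · rw [Term.realize_relabel, hcomp, Term.realize_restrictVar' ht]
lemma kValid_of_repr {K : MetricAlg L → Prop} {X : Type x} {s t : L.Term X} {n : ℕ}
    {s₀ t₀ : L.Term (Fin n)} {ρ : Fin n → X} (hinj : Function.Injective ρ)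
    (hreal : ∀ (M : Type u) (_ : L.Structure M) (v : X → M),
      s.realize v = s₀.realize (v ∘ ρ) ∧ t.realize v = t₀.realize (v ∘ ρ))
    {ε : ℝ≥0∞} (h : KValid K s t ε) : KValid K s₀ t₀ ε := by
  classical
  intro B hB w
  set v : X → B := fun y => if h' : ∃ i, ρ i = y then w h'.choose else s₀.realize w with hv
  have hvρ : v ∘ ρ = w := by
    funext i
    have h' : ∃ j, ρ j = ρ i := ⟨i, rfl⟩
    simp only [hv, Function.comp_apply, dif_pos h']
    exact congrArg w (hinj h'.choose_spec)
  obtain ⟨h1, h2⟩ := hreal B.carrier B.str v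
  have := h B hB v
  rwa [h1, h2, hvρ] at this
/-- The setoid on terms identifying terms at `K`-distance zero. -/
def termSetoid (K : MetricAlg L → Prop) (X : Type x) : Setoid (L.Term X) where
  r s t := kdist K s t = 0
  iseqv := by
    refine ⟨kdist_self K, fun {a b} h => ?_, fun {a b c} h1 h2 => ?_⟩
    · rw [kdist_comm]; exact h
    · exact le_antisymm ((kdist_triangle K a b c).trans (by simp [h1, h2])) (zero_le)

/-- The free metric algebra of `K` over `X` : terms modulo `K`-distance zero. -/
def FreeQ (K : MetricAlg L → Prop) (X : Type x) : Type max u x :=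
  Quotient (termSetoid K X)

def FreeQ.mk (K : MetricAlg L → Prop) {X : Type x} (s : L.Term X) : FreeQ K X :=
  Quotient.mk (termSetoid K X) s

lemma FreeQ.exact {K : MetricAlg L → Prop} {X : Type x} {s t : L.Term X}
    (h : FreeQ.mk K s = FreeQ.mk K t) : kdist K s t = 0 := Quotient.exact h

lemma FreeQ.sound {K : MetricAlg L → Prop} {X : Type x} {s t : L.Term X}
    (h : kdist K s t = 0) : FreeQ.mk K s = FreeQ.mk K t := Quotient.sound h

lemma FreeQ.out_mk {K : MetricAlg L → Prop} {X : Type x} (q : FreeQ K X) :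
    FreeQ.mk K q.out = q := Quotient.out_eq q

lemma FreeQ.ind {K : MetricAlg L → Prop} {X : Type x} {p : FreeQ K X → Prop}
    (h : ∀ s, p (FreeQ.mk K s)) : ∀ q, p q := Quotient.ind h

instance FreeQ.emetric (K : MetricAlg L → Prop) (X : Type x) :
    EMetricSpace (FreeQ K X) where
  edist := Quotient.lift₂ (kdist K) fun _ _ _ _ h1 h2 => kdist_congr h1 h2
  edist_self := Quotient.ind (kdist_self K)
  edist_comm := Quotient.ind₂ fun s t => kdist_comm K s t
  edist_triangle := by
    refine Quotient.ind fun s => Quotient.ind₂ fun t u => ?_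
    exact kdist_triangle K s t u
  eq_of_edist_eq_zero := by
    intro a b
    induction a using Quotient.ind
    induction b using Quotient.ind
    exact fun h => Quotient.sound h

lemma FreeQ.edist_mk (K : MetricAlg L → Prop) {X : Type x} (s t : L.Term X) :
    edist (FreeQ.mk K s) (FreeQ.mk K t) = kdist K s t := rfl

instance FreeQ.str [L.IsAlgebraic] (K : MetricAlg L → Prop) (X : Type x) :
    L.Structure (FreeQ K X) where
  funMap f q := FreeQ.mk K (Term.func f fun i => (q i).out)
  RelMap r _ := isEmptyElim r

lemma FreeQ.mk_func [L.IsAlgebraic] (K : MetricAlg L → Prop) {X : Type x}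
    {n : ℕ} (f : L.Functions n) (s : Fin n → L.Term X) :
    FreeQ.mk K (Term.func f s) = Structure.funMap f (fun i => FreeQ.mk K (s i)) := by
  exact FreeQ.sound (kdist_func f fun i => FreeQ.exact (FreeQ.out_mk _).symm)

/-- The free metric algebra as a `MetricAlg`. -/
def FreeAlg [L.IsAlgebraic] (K : MetricAlg L → Prop) (X : Type u) : MetricAlg L where
  carrier := FreeQ K X
lemma mem_of_forall_sat [L.IsAlgebraic] {K : MetricAlg L → Prop}
    (hIso : ClosedUnderIso K) (hP : ClosedUnderProd K) (hS : ClosedUnderSub K)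
    (hQ : ClosedUnderQuot K) (A : MetricAlg L)
    (hA : ∀ (n : ℕ) (s₀ t₀ : L.Term (Fin n)) (ε : ℝ≥0∞),
      KValid K s₀ t₀ ε → Sat A s₀ t₀ ε) : K A := by
  classical
  set X : Type u := A.carrier with hX
  set e : L.Term X → A.carrier := fun s => s.realize id with he
  have he_func : ∀ {n : ℕ} (f : L.Functions n) (ts : Fin n → L.Term X),
      e (Term.func f ts) = Structure.funMap f (fun i => e (ts i)) := fun f ts => rfl
  have edist_e_le : ∀ s t : L.Term X, edist (e s) (e t) ≤ kdist K s t := by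
    intro s t
    obtain ⟨n, s₀, t₀, ρ, hinj, hreal⟩ := exists_fin_repr s t
    have hval : KValid K s₀ t₀ (kdist K s t) :=
      kValid_of_repr hinj (fun M strM v => hreal M strM v) (kValid_kdist K s t)
    obtain ⟨h1, h2⟩ := hreal A.carrier A.str id
    show edist (s.realize id) (t.realize id) ≤ kdist K s t
    rw [h1, h2]
    exact hA n s₀ t₀ _ hval (id ∘ ρ)
  have hker : ∀ {s t : L.Term X}, kdist K s t = 0 → e s = e t := by
    intro s t h
    have h2 := edist_e_le s t
    rw [h] at h2
    exact eq_of_edist_eq_zero (le_antisymm h2 (zero_le))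
  -- the product of enough witnesses
  set J : Type u := {p : (L.Term X × L.Term X) × ℝ≥0∞ // p.2 < kdist K p.1.1 p.1.2} with hJ
  have hwit : ∀ j : J,
      ∃ B : MetricAlg L, K B ∧ ∃ w : X → B.carrier,
        j.1.2 < edist (j.1.1.1.realize w) (j.1.1.2.realize w) := by
    intro j
    by_contra hcon
    push_neg at hcon
    exact absurd (kdist_le fun B hB w => hcon B hB w) (not_le.2 j.2)
  choose Bf hBf wf hwf using hwit
  set P : MetricAlg L := MProd Bf with hPdef
  have hKP : K P := hP J Bf hBf
  set H : L.Term X → P.carrier := fun s j => s.realize (wf j) with hH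
  have map_fun_H : ∀ {n : ℕ} (f : L.Functions n) (ts : Fin n → L.Term X),
      H (Structure.funMap f ts) = Structure.funMap f (fun i => H (ts i)) :=
    fun _ _ => rfl
  have hHle : ∀ s t : L.Term X, edist (H s) (H t) = kdist K s t := by
    intro s t
    rw [show edist (H s) (H t) = ⨆ j, edist (H s j) (H t j) from rfl]
    refine le_antisymm (iSup_le fun j => kValid_kdist K s t (Bf j) (hBf j) (wf j)) ?_
    refine le_of_forall_lt fun c hc => ?_
    exact lt_of_lt_of_le (hwf ⟨((s, t), c), hc⟩)
      (le_iSup (fun j => edist (H s j) (H t j)) ⟨((s, t), c), hc⟩)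
  have hHker : ∀ {s t : L.Term X}, H s = H t ↔ kdist K s t = 0 := by
    intro s t
    constructor
    · intro h
      rw [← hHle s t, h, edist_self]
    · intro h
      refine eq_of_edist_eq_zero ?_
      rw [hHle s t, h]
  set Hhom : L.Term X →[L] P.carrier :=
    { toFun := H
      map_fun' := fun f ts => map_fun_H f ts
      map_rel' := fun r _ _ => isEmptyElim r } with hHhom
  set S : L.Substructure P.carrier := Hhom.range with hSdef
  have hKS : K (MSub P S) := hS P hKP S
  -- the isomorphism from the subalgebra to the free algebra
  have hmem : ∀ x : S, ∃ s : L.Term X, H s = x.val := fun x => Hom.mem_range.1 x.2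
  choose sec hsec using hmem
  set FA : MetricAlg L := FreeAlg K X with hFAdef
  set g : S → FreeQ K X := fun x => FreeQ.mk K (sec x) with hg
  have hg_eq : ∀ (x : S) (s : L.Term X), x.val = H s → g x = FreeQ.mk K s := by
    intro x s h
    exact FreeQ.sound (hHker.1 (by rw [hsec x, h]))
  have hg_bij : Function.Bijective g := by
    constructor
    · intro x y hxy
      apply Subtype.ext
      rw [← hsec x, ← hsec y]
      exact hHker.2 (FreeQ.exact hxy)
    · refine Quotient.ind fun s => ?_
      exact ⟨⟨H s, Hom.mem_range_self Hhom s⟩, hg_eq _ s rfl⟩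
  have hg_fun : ∀ {n : ℕ} (f : L.Functions n) (xs : Fin n → S),
      g (Structure.funMap f xs) = Structure.funMap f (fun i => g (xs i)) := by
    intro n f xs
    have hval : (Structure.funMap f xs).val = H (Term.func f fun i => sec (xs i)) := by
      rw [show (Structure.funMap f xs).val = Structure.funMap f (fun i => (xs i).val)
        from rfl]
      rw [show (fun i => (xs i).val) = fun i => H (sec (xs i))
        from funext fun i => (hsec (xs i)).symm]
      exact (map_fun_H f _).symm
    rw [hg_eq _ _ hval, FreeQ.mk_func K f (fun i => sec (xs i))]
  have hg_isom : Isometry g := by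
    intro x y
    show edist (FreeQ.mk K (sec x)) (FreeQ.mk K (sec y)) = edist x y
    rw [FreeQ.edist_mk, ← hHle, hsec x, hsec y]
    rfl
  set φ : (MSub P S) ≃[L] FA :=
    { toEquiv := Equiv.ofBijective g hg_bij
      map_fun' := fun f xs => hg_fun f xs
      map_rel' := fun r _ => isEmptyElim r } with hφ
  have hKFA : K FA := hIso (MSub P S) FA hKS φ hg_isom
  -- the quotient map onto A
  set π : FA →[L] A :=
    { toFun := Quotient.lift e fun s t h => hker h
      map_fun' := by
        intro n f q
        show e (Term.func f fun i => (q i).out) = _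
        rw [he_func]
        congr 1
        funext i
        exact (congrArg (Quotient.lift e fun s t h => hker h) (FreeQ.out_mk (q i)))
      map_rel' := fun r _ _ => isEmptyElim r } with hπ
  have hπs : Function.Surjective ⇑π := fun a => ⟨FreeQ.mk K (Term.var a), rfl⟩
  have hπn : NonExpansive ⇑π := by
    intro a b
    refine Quotient.inductionOn₂ a b fun s t => ?_
    exact edist_e_le s t
  exact hQ FA A hKFA π hπs hπn
/-- **variety theorem / metric HSP theorem.** A class `K` of metric
`L`-algebras closed under isometric isomorphisms is a variety (defined by a set of
M-equations, each over a finite variable set) iff it is closed under M-products,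
M-subalgebras and M-quotients. -/
theorem variety_iff_closed_hsp (L : FirstOrder.Language.{u, v}) [L.IsAlgebraic]
    (K : MetricAlg L → Prop) (hIso : ClosedUnderIso K) :
    (∃ I : Set (Σ n : ℕ, L.Term (Fin n) × L.Term (Fin n) × ℝ≥0∞),
        ∀ A : MetricAlg L, K A ↔ ∀ e ∈ I, Sat A e.2.1 e.2.2.1 e.2.2.2) ↔
      (ClosedUnderProd K ∧ ClosedUnderSub K ∧ ClosedUnderQuot K) := by
  constructor
  · rintro ⟨I, hI⟩
    refine ⟨?_, ?_, ?_⟩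
    · -- products
      intro J Af hAf
      rw [hI]
      intro eq heq v
      rw [show edist (eq.2.1.realize v) (eq.2.2.1.realize v) =
          ⨆ i, edist (eq.2.1.realize v i) (eq.2.2.1.realize v i) from rfl]
      refine iSup_le fun i => ?_
      rw [realize_MProd, realize_MProd]
      exact (hI (Af i)).1 (hAf i) eq heq (fun x => v x i)
    · -- subalgebras
      intro A hKA S
      rw [hI]
      intro eq heq v
      let v' : Fin eq.1 → (S : Set A.carrier) := v
      have key : ∀ u : L.Term (Fin eq.1), ((u.realize v' : S) : A.carrier) =
          u.realize (fun i => ((v' i : S) : A.carrier)) := by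
        intro u
        have h := HomClass.realize_term (M := S) (N := A.carrier) S.subtype
          (t := u) (v := v')
        simp only [Substructure.coe_subtype] at h
        exact h.symm
      show @edist ↥S _ (eq.2.1.realize v') (eq.2.2.1.realize v') ≤ eq.2.2.2
      rw [Subtype.edist_eq, key, key]
      exact (hI A).1 hKA eq heq _
    · -- quotients
      intro A B hKA π hsurj hne
      rw [hI]
      intro eq heq v
      choose u hu using fun i => hsurj (v i)
      have hv : ⇑π ∘ u = v := funext hu
      have key : ∀ w : L.Term (Fin eq.1), w.realize v = π (w.realize u) := by
        intro w
        rw [← HomClass.realize_term (M := A.carrier) π (t := w) (v := u), hv]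
      rw [key, key]
      exact ((hne _ _).trans ((hI A).1 hKA eq heq u))
  · rintro ⟨hP, hS, hQ⟩
    refine ⟨{e | KValid K e.2.1 e.2.2.1 e.2.2.2}, fun A => ⟨?_, ?_⟩⟩
    · intro hKA e he
      exact fun v => he A hKA v
    · intro hsat
      exact mem_of_forall_sat hIso hP hS hQ A fun n s₀ t₀ ε hv =>
        hsat ⟨n, s₀, t₀, ε⟩ hv
end MetricAlgebraPaper
end
end

section
/- There exist a normed real vector space V, a real vector space W equipped with a metric d, and a surjective ℝ-linear map f : V → W that is non-expansive (d(f(u), f(v)) ≤ ‖u − v‖ for all u, v ∈ V), such that the metric d on W is not induced by any norm on W. Concretely, one may take V = ℝ with its usual absolute-value norm, W = ℝ with its usual vector space structure and the metric d(x, y) = |tanh(x) − tanh(y)|, and f the identity map. Consequently, the class of normed real vector spaces, regarded as metric algebras, is not closed under M-quotients. -/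
open Real

lemma tanh_hasDerivAt (x : ℝ) : HasDerivAt Real.tanh (1 / Real.cosh x ^ 2) x := by
  have h : HasDerivAt (fun y => Real.sinh y / Real.cosh y)
      ((Real.cosh x * Real.cosh x - Real.sinh x * Real.sinh x) / Real.cosh x ^ 2) x :=
    (Real.hasDerivAt_sinh x).div (Real.hasDerivAt_cosh x) (Real.cosh_pos x).ne'
  have : (Real.cosh x * Real.cosh x - Real.sinh x * Real.sinh x) = 1 := by
    have := Real.cosh_sq_sub_sinh_sq x; ring_nf; ring_nf at this; linarith
  rw [this] at h
  exact h.congr_of_eventuallyEq (Filter.Eventually.of_forall fun y =>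
    (Real.tanh_eq_sinh_div_cosh y))

lemma tanh_strictMono : StrictMono Real.tanh := by
  apply strictMono_of_deriv_pos
  intro x
  rw [(tanh_hasDerivAt x).deriv]
  positivity

lemma tanh_lipschitz (u v : ℝ) : |Real.tanh u - Real.tanh v| ≤ |u - v| := by
  have h : LipschitzWith 1 Real.tanh := by
    apply lipschitzWith_of_nnnorm_deriv_le (fun x => (tanh_hasDerivAt x).differentiableAt)
    intro x
    rw [(tanh_hasDerivAt x).deriv]
    rw [← NNReal.coe_le_coe, coe_nnnorm, Real.norm_eq_abs, NNReal.coe_one]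
    rw [abs_of_pos (by positivity)]
    rw [div_le_one (by positivity)]
    nlinarith [Real.one_le_cosh x]
  simpa [Real.dist_eq] using h.dist_le_mul u v

lemma tanh_lt_one (x : ℝ) : Real.tanh x < 1 := by
  rw [Real.tanh_eq_sinh_div_cosh, div_lt_one (Real.cosh_pos x)]
  exact Real.sinh_lt_cosh x

/-- There are a normed real vector space (here `ℝ` with the
absolute-value norm), a real vector space `ℝ` equipped with a metric
`d(x, y) = |tanh x − tanh y|`, and a surjective `ℝ`-linear non-expansive map between
them (the identity), such that the metric on the codomain is not induced by any norm. -/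
theorem normed_spaces_not_closed_under_mQuotients :
    ∃ (f : ℝ →ₗ[ℝ] ℝ) (d : ℝ → ℝ → ℝ),
      (∀ x y : ℝ, d x y = |Real.tanh x - Real.tanh y|) ∧
      (∀ x y : ℝ, d x y = 0 ↔ x = y) ∧
      (∀ x y : ℝ, d x y = d y x) ∧
      (∀ x y z : ℝ, d x z ≤ d x y + d y z) ∧
      Function.Surjective ⇑f ∧
      (∀ u v : ℝ, d (f u) (f v) ≤ ‖u - v‖) ∧
      ¬ ∃ n : ℝ → ℝ,
        (∀ x : ℝ, n x = 0 ↔ x = 0) ∧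
        (∀ a x : ℝ, n (a • x) = |a| * n x) ∧
        (∀ x y : ℝ, n (x + y) ≤ n x + n y) ∧
        (∀ x y : ℝ, d x y = n (x - y)) := by
  refine ⟨LinearMap.id, fun x y => |Real.tanh x - Real.tanh y|, fun _ _ => rfl, ?_, ?_, ?_, ?_, ?_, ?_⟩
  · intro x y
    constructor
    · intro h
      exact tanh_strictMono.injective (by rwa [abs_eq_zero, sub_eq_zero] at h)
    · rintro rfl; simp
  · intro x y; exact abs_sub_comm _ _
  · intro x y z
    exact abs_sub_le _ _ _
  · exact Function.surjective_id
  · intro u v; simpa [Real.norm_eq_abs] using tanh_lipschitz u v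
  · rintro ⟨n, -, hhom, -, hdn⟩
    have hn : ∀ x : ℝ, n x = |Real.tanh x| := by
      intro x
      have := hdn x 0
      simp [Real.tanh_zero] at this
      rw [← this]
    have h1 : (0:ℝ) < Real.tanh 1 := by
      have := tanh_strictMono (show (0:ℝ) < 1 by norm_num)
      simpa [Real.tanh_zero] using this
    set a : ℝ := 2 / Real.tanh 1 with ha
    have hapos : 0 < a := by positivity
    have h2 : n a = |a| * n 1 := by simpa using hhom a 1
    rw [hn, hn] at h2
    have hval : |a| * |Real.tanh 1| = 2 := by
      rw [abs_of_pos hapos, abs_of_pos h1, ha, div_mul_cancel₀ _ h1.ne']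
    have hta : 0 < Real.tanh a := by
      simpa [Real.tanh_zero] using tanh_strictMono hapos
    have hlt : |Real.tanh a| < 1 := by
      rw [abs_of_pos hta]; exact _root_.tanh_lt_one a
    rw [hval] at h2
    linarith
end
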